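/- Let L be a 0-distributive lattice with least element 0. Then the zero-divisor graph Γ(L) is complemented if and only if Min(L), the space of minimal prime ideals of L with the subspace topology inherited from the Zariski topology on Spec(L), is compact. -/

import Mathlib

namespace ZDL

variable (L : Type*) [Lattice L] [OrderBot L]

/-- A lattice with least element `0` is `0`-distributive if `x ⊓ y = 0` and
`x ⊓ z = 0` imply `x ⊓ (y ⊔ z) = 0`. -/
def ZeroDistributive : Prop :=
  ∀ x y z : L, x ⊓ y = ⊥ → x ⊓ z = ⊥ → x ⊓ (y ⊔ z) = ⊥

variable {L} in
/-- A lattice ideal: nonempty, downward closed, and closed under joins. -/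
def IsLatIdeal (I : Set L) : Prop :=
  I.Nonempty ∧ IsLowerSet I ∧ ∀ a ∈ I, ∀ b ∈ I, a ⊔ b ∈ I

variable {L} in
/-- A prime lattice ideal: proper and `x ⊓ y ∈ P` implies `x ∈ P` or `y ∈ P`. -/
def IsPrimeLatIdeal (P : Set L) : Prop :=
  IsLatIdeal P ∧ P ≠ Set.univ ∧ ∀ x y : L, x ⊓ y ∈ P → x ∈ P ∨ y ∈ P

variable {L} in
/-- The annihilator `x^⊥ = {y : x ⊓ y = 0}` of an element. -/
def ann (x : L) : Set L := {y | x ⊓ y = ⊥}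

variable {L} in
/-- The annihilator `A^⊥` of a subset. -/
def annSet (A : Set L) : Set L := {y | ∀ a ∈ A, a ⊓ y = ⊥}

variable {L} in
/-- The smallest lattice ideal `(x] ∨ (y]` containing `(x]` and `(y]`. -/
def idealSup (x y : L) : Set L :=
  ⋂₀ {I : Set L | IsLatIdeal I ∧ Set.Iic x ⊆ I ∧ Set.Iic y ⊆ I}

/-- A lattice is quasi-complemented if for every `x` there is `y ≠ x` with
`x ⊓ y = 0` and `((x] ∨ (y])^⊥ = {0}`. -/
def QuasiComplemented : Prop :=
  ∀ x : L, ∃ y : L, y ≠ x ∧ x ⊓ y = ⊥ ∧ annSet (idealSup x y) = {⊥}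

variable {L} in
/-- Adjacency in the zero-divisor graph `Γ(L)`. -/
def zdAdj (x y : L) : Prop := x ≠ y ∧ x ≠ ⊥ ∧ y ≠ ⊥ ∧ x ⊓ y = ⊥

variable {L} in
/-- Vertices of `Γ(L)`: the nonzero zero-divisors. -/
def IsZDVertex (x : L) : Prop := x ≠ ⊥ ∧ ∃ y : L, y ≠ ⊥ ∧ x ⊓ y = ⊥

/-- The zero-divisor graph `Γ(L)` is complemented: every vertex `a` has an adjacent
vertex `b` such that no vertex is adjacent to both `a` and `b`. -/
def GammaComplemented : Prop :=
  ∀ x : L, IsZDVertex x →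
    ∃ y : L, zdAdj x y ∧ ∀ c : L, ¬ (zdAdj c x ∧ zdAdj c y)

/-- The prime spectrum of a lattice. -/
def Spec := {P : Set L // IsPrimeLatIdeal P}

/-- The Zariski topology on `Spec L`, whose closed sets are the sets
`V(I) = {P : I ⊆ P}` for lattice ideals `I`. -/
instance : TopologicalSpace (Spec L) :=
  TopologicalSpace.generateFrom
    {U : Set (Spec L) | ∃ I : Set L, IsLatIdeal I ∧ U = {P : Spec L | ¬ I ⊆ P.1}}

/-- `Min(L)`: the minimal prime ideals, as a subset of `Spec L`. -/
def MinSpec : Set (Spec L) :=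
  {P : Spec L | ∀ P' : Set L, IsPrimeLatIdeal P' → P' ⊆ P.1 → P' = P.1}

end ZDL

section ZDLemmas
open ZDL

variable {L : Type*} [Lattice L] [OrderBot L]

/-- meet-closure of a set -/
inductive ZDMeets (B : Set L) : L → Prop
  | base {b : L} : b ∈ B → ZDMeets B b
  | meet {a b : L} : ZDMeets B a → ZDMeets B b → ZDMeets B (a ⊓ b)

/-- a proper (`⊥`-free) filter -/
def ZDGoodF (F : Set L) : Prop :=
  F.Nonempty ∧ IsUpperSet F ∧ (∀ a ∈ F, ∀ b ∈ F, a ⊓ b ∈ F) ∧ ⊥ ∉ F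

lemma zd_bot_mem {I : Set L} (hI : IsLatIdeal I) : ⊥ ∈ I := by
  obtain ⟨⟨a, ha⟩, hl, -⟩ := hI
  exact hl bot_le ha

lemma zd_max_filter {F0 : Set L} (h : ZDGoodF F0) :
    ∃ M, F0 ⊆ M ∧ ZDGoodF M ∧ ∀ G, ZDGoodF G → M ⊆ G → G = M := by
  have hch : ∀ c ⊆ {F : Set L | ZDGoodF F}, IsChain (· ⊆ ·) c → c.Nonempty →
      ∃ ub ∈ {F : Set L | ZDGoodF F}, ∀ s ∈ c, s ⊆ ub := by
    intro c hcS hchain hcne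
    refine ⟨⋃₀ c, ⟨?_, ?_, ?_, ?_⟩, fun s hs => Set.subset_sUnion_of_mem hs⟩
    · obtain ⟨F, hF⟩ := hcne
      obtain ⟨a, ha⟩ := (hcS hF).1
      exact ⟨a, F, hF, ha⟩
    · rintro a b hab ⟨F, hF, haF⟩
      exact ⟨F, hF, (hcS hF).2.1 hab haF⟩
    · rintro a ⟨F1, hF1, ha⟩ b ⟨F2, hF2, hb⟩
      rcases eq_or_ne F1 F2 with rfl | hne
      · exact ⟨F1, hF1, (hcS hF1).2.2.1 a ha b hb⟩
      · rcases hchain hF1 hF2 hne with h | h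
        · exact ⟨F2, hF2, (hcS hF2).2.2.1 a (h ha) b hb⟩
        · exact ⟨F1, hF1, (hcS hF1).2.2.1 a ha b (h hb)⟩
    · rintro ⟨F, hF, hbot⟩
      exact (hcS hF).2.2.2 hbot
  obtain ⟨M, hsub, hMS, hMmax⟩ := zorn_subset_nonempty {F : Set L | ZDGoodF F} hch F0 h
  exact ⟨M, hsub, hMS, fun G hG hMG => subset_antisymm (hMmax hG hMG) hMG⟩

lemma zd_absorb {M : Set L} (hM : ZDGoodF M)
    (hmax : ∀ G, ZDGoodF G → M ⊆ G → G = M) {a : L} (ha : a ∉ M) :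
    ∃ m ∈ M, m ⊓ a = ⊥ := by
  by_contra h
  push_neg at h
  have hMG : M ⊆ {w : L | ∃ m ∈ M, m ⊓ a ≤ w} := fun m hm => ⟨m, hm, inf_le_left⟩
  have hGgood : ZDGoodF {w : L | ∃ m ∈ M, m ⊓ a ≤ w} := by
    refine ⟨hM.1.mono hMG, ?_, ?_, ?_⟩
    · rintro u v huv ⟨m, hm, hma⟩
      exact ⟨m, hm, hma.trans huv⟩
    · rintro u ⟨m1, hm1, h1⟩ v ⟨m2, hm2, h2⟩
      refine ⟨m1 ⊓ m2, hM.2.2.1 _ hm1 _ hm2, le_inf ?_ ?_⟩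
      · exact le_trans (inf_le_inf_right a inf_le_left) h1
      · exact le_trans (inf_le_inf_right a inf_le_right) h2
    · rintro ⟨m, hm, hle⟩
      exact h m hm (le_bot_iff.mp hle)
  have heq := hmax _ hGgood hMG
  obtain ⟨m0, hm0⟩ := hM.1
  exact ha (heq ▸ (⟨m0, hm0, inf_le_right⟩ : a ∈ {w : L | ∃ m ∈ M, m ⊓ a ≤ w}))

lemma zd_compl_good {Q : Set L} (hQ : IsPrimeLatIdeal Q) : ZDGoodF (Qᶜ : Set L) := by
  refine ⟨?_, ?_, ?_, ?_⟩
  · obtain ⟨a, ha⟩ : ∃ a, a ∉ Q := by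
      by_contra h
      push_neg at h
      exact hQ.2.1 (Set.eq_univ_iff_forall.mpr h)
    exact ⟨a, ha⟩
  · intro a b hab ha hb
    exact ha (hQ.1.2.1 hab hb)
  · intro a ha b hb hab
    rcases hQ.2.2 a b hab with h | h
    exacts [ha h, hb h]
  · exact fun h => h (zd_bot_mem hQ.1)

lemma zd_compl_prime (h0 : ZeroDistributive L) {M : Set L} (hM : ZDGoodF M)
    (hmax : ∀ G, ZDGoodF G → M ⊆ G → G = M) :
    IsPrimeLatIdeal (Mᶜ : Set L) ∧ ∀ Q : Set L, IsPrimeLatIdeal Q → Q ⊆ Mᶜ → Q = Mᶜ := by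
  have hjoin : ∀ a b : L, a ∉ M → b ∉ M → a ⊔ b ∉ M := by
    intro a b ha hb hab
    obtain ⟨m1, hm1, h1⟩ := zd_absorb hM hmax ha
    obtain ⟨m2, hm2, h2⟩ := zd_absorb hM hmax hb
    have hm : m1 ⊓ m2 ∈ M := hM.2.2.1 _ hm1 _ hm2
    have h1' : (m1 ⊓ m2) ⊓ a = ⊥ :=
      le_bot_iff.mp (h1 ▸ inf_le_inf_right a inf_le_left)
    have h2' : (m1 ⊓ m2) ⊓ b = ⊥ :=
      le_bot_iff.mp (h2 ▸ inf_le_inf_right b inf_le_right)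
    have hz := h0 (m1 ⊓ m2) a b h1' h2'
    exact hM.2.2.2 (hz ▸ hM.2.2.1 _ hm _ hab)
  have hprime : IsPrimeLatIdeal (Mᶜ : Set L) := by
    refine ⟨⟨⟨⊥, hM.2.2.2⟩, ?_, ?_⟩, ?_, ?_⟩
    · intro a b hab ha hb
      exact ha (hM.2.1 hab hb)
    · intro a ha b hb
      exact hjoin a b ha hb
    · intro h
      obtain ⟨m0, hm0⟩ := hM.1
      have : m0 ∈ (Mᶜ : Set L) := h ▸ Set.mem_univ m0
      exact this hm0
    · intro x y hxy
      by_contra h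
      push_neg at h
      obtain ⟨hx, hy⟩ := h
      simp only [Set.notMem_compl_iff] at hx hy
      exact hxy (hM.2.2.1 x hx y hy)
  refine ⟨hprime, fun Q hQ hQM => ?_⟩
  have hMQc : M ⊆ Qᶜ := by
    intro m hm hmQ
    exact (hQM hmQ) hm
  have := hmax _ (zd_compl_good hQ) hMQc
  rw [← compl_compl Q, this]

lemma zd_min_max (h0 : ZeroDistributive L) {P : Set L} (hP : IsPrimeLatIdeal P)
    (hmin : ∀ Q, IsPrimeLatIdeal Q → Q ⊆ P → Q = P) :
    ∀ G, ZDGoodF G → Pᶜ ⊆ G → G = Pᶜ := by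
  intro G hG hPG
  obtain ⟨M, hGM, hMgood, hMmax⟩ := zd_max_filter hG
  obtain ⟨hMprime, -⟩ := zd_compl_prime h0 hMgood hMmax
  have hMP : (Mᶜ : Set L) ⊆ P := by
    intro a ha
    by_contra haP
    exact ha (hGM (hPG haP))
  have hMeq : (Mᶜ : Set L) = P := hmin _ hMprime hMP
  have hM : M = (Pᶜ : Set L) := by rw [← hMeq, compl_compl]
  exact subset_antisymm (hM ▸ hGM) hPG

lemma zd_minprime_ann (h0 : ZeroDistributive L) {P : Set L} (hP : IsPrimeLatIdeal P)
    (hmin : ∀ Q, IsPrimeLatIdeal Q → Q ⊆ P → Q = P) {x : L} (hx : x ∈ P) :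
    ∃ z, z ∉ P ∧ x ⊓ z = ⊥ := by
  obtain ⟨m, hm, hma⟩ := zd_absorb (zd_compl_good hP) (zd_min_max h0 hP hmin)
    (a := x) (Set.notMem_compl_iff.mpr hx)
  exact ⟨m, hm, by rwa [inf_comm]⟩

lemma zd_exists_minprime (h0 : ZeroDistributive L) {c : L} (hc : c ≠ ⊥) :
    ∃ P : Set L, IsPrimeLatIdeal P ∧ (∀ Q, IsPrimeLatIdeal Q → Q ⊆ P → Q = P) ∧ c ∉ P := by
  have hgood : ZDGoodF (Set.Ici c) := by
    refine ⟨⟨c, le_refl c⟩, isUpperSet_Ici c, ?_, ?_⟩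
    · intro a ha b hb
      exact le_inf ha hb
    · intro h
      exact hc (le_bot_iff.mp h)
  obtain ⟨M, hIM, hMgood, hMmax⟩ := zd_max_filter hgood
  obtain ⟨hMprime, hMmin⟩ := zd_compl_prime h0 hMgood hMmax
  exact ⟨Mᶜ, hMprime, hMmin, fun h => h (hIM (le_refl c))⟩

/-- the basic open set `U(z) = {P : z ∉ P}` -/
def ZDU (z : L) : Set (Spec L) := {P : Spec L | z ∉ P.1}

lemma zdU_eq (z : L) : ZDU (L := L) z = {P : Spec L | ¬ Set.Iic z ⊆ P.1} := by
  ext P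
  simp only [ZDU, Set.mem_setOf_eq]
  constructor
  · intro h hsub
    exact h (hsub (le_refl z))
  · intro h hz
    exact h (fun a ha => P.2.1.2.1 ha hz)

lemma zd_Iic_ideal (z : L) : IsLatIdeal (Set.Iic z) :=
  ⟨⟨z, le_refl z⟩, isLowerSet_Iic z, fun a ha b hb => sup_le ha hb⟩

lemma zdU_isOpen (z : L) : IsOpen (ZDU (L := L) z) := by
  rw [zdU_eq]
  exact TopologicalSpace.isOpen_generateFrom_of_mem ⟨Set.Iic z, zd_Iic_ideal z, rfl⟩

lemma zd_exists_not_mem (P : Spec L) : ∃ z : L, z ∉ P.1 := by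
  by_contra h
  push_neg at h
  exact P.2.2.1 (Set.eq_univ_iff_forall.mpr h)

lemma zd_basis {O : Set (Spec L)} (hO : IsOpen O) :
    ∀ P : Spec L, P ∈ O → ∃ z : L, z ∉ P.1 ∧ ZDU z ⊆ O := by
  have hgen : TopologicalSpace.GenerateOpen
      {U : Set (Spec L) | ∃ I : Set L, IsLatIdeal I ∧ U = {P : Spec L | ¬ I ⊆ P.1}} O := hO
  clear hO
  induction hgen with
  | basic U hU =>
      intro P hP
      obtain ⟨I, hI, rfl⟩ := hU
      obtain ⟨z, hzI, hz⟩ := Set.not_subset.mp hP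
      exact ⟨z, hz, fun Q hQ hsub => hQ (hsub hzI)⟩
  | univ =>
      intro P _
      obtain ⟨z, hz⟩ := zd_exists_not_mem P
      exact ⟨z, hz, fun _ _ => trivial⟩
  | inter U V hU hV ihU ihV =>
      intro P hP
      obtain ⟨z1, hz1, hs1⟩ := ihU P hP.1
      obtain ⟨z2, hz2, hs2⟩ := ihV P hP.2
      refine ⟨z1 ⊓ z2, ?_, ?_⟩
      · intro h
        rcases P.2.2.2 z1 z2 h with h | h
        exacts [hz1 h, hz2 h]
      · intro Q hQ
        have h1 : z1 ∉ Q.1 := fun h => hQ (Q.2.1.2.1 inf_le_left h)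
        have h2 : z2 ∉ Q.1 := fun h => hQ (Q.2.1.2.1 inf_le_right h)
        exact ⟨hs1 h1, hs2 h2⟩
  | sUnion S hS ih =>
      intro P hP
      obtain ⟨U, hU, hPU⟩ := hP
      obtain ⟨z, hz, hsub⟩ := ih U hU P hPU
      exact ⟨z, hz, fun Q hQ => ⟨U, hU, hsub hQ⟩⟩

lemma zd_sup_ann (h0 : ZeroDistributive L) {ι : Type*} (x : L) (f : ι → L) :
    ∀ t : Finset ι, (∀ i ∈ t, x ⊓ f i = ⊥) → x ⊓ t.sup f = ⊥ := by
  classical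
  intro t
  induction t using Finset.induction_on with
  | empty => intro _; simp
  | insert _ _ ha ih =>
      intro h
      rw [Finset.sup_insert]
      exact h0 _ _ _ (h _ (Finset.mem_insert_self _ _))
        (ih fun i hi => h i (Finset.mem_insert_of_mem hi))

end ZDLemmas

open ZDL in
/-- For a `0`-distributive lattice `L`, the zero-divisor graph `Γ(L)`
is complemented iff `Min(L)`, with the subspace topology from the Zariski topology
on `Spec L`, is compact. -/
theorem stmt_14 (L : Type*) [Lattice L] [OrderBot L] (h0 : ZeroDistributive L) :
    GammaComplemented L ↔ IsCompact (MinSpec L) := by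
  classical
  constructor
  · -- Γ(L) complemented → Min(L) compact
    intro hcomp
    refine isCompact_of_finite_subcover ?_
    intro ι Uo hUo hcov
    by_contra hnofin
    push_neg at hnofin
    set S : Set L := {z | z ≠ ⊥ ∧ ∃ i, ZDU z ⊆ Uo i} with hS
    have hcovS : ∀ P ∈ MinSpec L, ∃ z ∈ S, z ∉ P.1 := by
      intro P hP
      obtain ⟨i, hPi⟩ := Set.mem_iUnion.mp (hcov hP)
      obtain ⟨z, hz, hsub⟩ := zd_basis (hUo i) P hPi
      exact ⟨z, ⟨fun h => hz (h ▸ zd_bot_mem P.2.1), i, hsub⟩, hz⟩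
    have hnofinS : ∀ T : Finset L, ↑T ⊆ S → ∃ P ∈ MinSpec L, ∀ z ∈ T, z ∈ P.1 := by
      intro T hT
      by_contra h
      push_neg at h
      have hchoice : ∀ z : {z // z ∈ T}, ∃ i, ZDU z.1 ⊆ Uo i := fun z => (hT z.2).2
      choose k hk using hchoice
      refine hnofin (T.attach.image k) ?_
      intro P hP
      obtain ⟨z, hzT, hzP⟩ := h P hP
      exact Set.mem_iUnion₂.mpr ⟨k ⟨z, hzT⟩,
        Finset.mem_image.mpr ⟨⟨z, hzT⟩, Finset.mem_attach _ _, rfl⟩, hk ⟨z, hzT⟩ hzP⟩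
    obtain ⟨P0, hP0, -⟩ := hnofinS ∅ (by simp)
    obtain ⟨z0, hz0S, -⟩ := hcovS P0 hP0
    have hvert : ∀ z ∈ S, ∃ y : L,
        z ⊓ y = ⊥ ∧ y ≠ ⊥ ∧ ∀ c : L, c ⊓ z = ⊥ → c ⊓ y = ⊥ → c = ⊥ := by
      intro z hzS
      obtain ⟨P, hPmin, hzP'⟩ := hnofinS {z} (by simpa using hzS)
      have hzP : z ∈ P.1 := hzP' z (Finset.mem_singleton_self z)
      obtain ⟨a, haP, hza⟩ := zd_minprime_ann h0 P.2 hPmin hzP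
      have hzv : IsZDVertex z := ⟨hzS.1, a, fun h => haP (h ▸ zd_bot_mem P.2.1), hza⟩
      obtain ⟨y, ⟨hzy, -, hybot, hzyb⟩, hnc⟩ := hcomp z hzv
      refine ⟨y, hzyb, hybot, ?_⟩
      intro c hcz hcy
      by_contra hcbot
      refine hnc c ⟨⟨?_, hcbot, hzS.1, hcz⟩, ⟨?_, hcbot, hybot, hcy⟩⟩
      · intro h
        exact hcbot (by rw [← hcz, ← h, inf_idem])
      · intro h
        exact hcbot (by rw [← hcy, ← h, inf_idem])
    choose! g hg1 hg2 hg3 using hvert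
    have hfree : ∀ c : L, ZDMeets (g '' S) c →
        ∃ T : Finset L, ↑T ⊆ S ∧
          ∀ P : Spec L, P ∈ MinSpec L → (∀ z ∈ T, z ∈ P.1) → c ∉ P.1 := by
      intro c hc
      induction hc with
      | base hb =>
          rename_i b
          obtain ⟨z, hzS, rfl⟩ := hb
          refine ⟨{z}, by simpa using hzS, ?_⟩
          intro P hPmin hzP hgzP
          have hzP' : z ∈ P.1 := hzP z (Finset.mem_singleton_self z)
          obtain ⟨a, haP, hza⟩ := zd_minprime_ann h0 P.2 hPmin hzP'
          obtain ⟨b', hbP, hgzb⟩ := zd_minprime_ann h0 P.2 hPmin hgzP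
          have h1 : (a ⊓ b') ⊓ z = ⊥ := by
            refine le_bot_iff.mp ?_
            calc (a ⊓ b') ⊓ z ≤ a ⊓ z := inf_le_inf_right z inf_le_left
              _ = ⊥ := by rw [inf_comm]; exact hza
          have h2 : (a ⊓ b') ⊓ g z = ⊥ := by
            refine le_bot_iff.mp ?_
            calc (a ⊓ b') ⊓ g z ≤ b' ⊓ g z := inf_le_inf_right _ inf_le_right
              _ = ⊥ := by rw [inf_comm]; exact hgzb
          have hab : a ⊓ b' = ⊥ := hg3 z hzS (a ⊓ b') h1 h2
          rcases P.2.2.2 a b' (by rw [hab]; exact zd_bot_mem P.2.1) with h | h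
          exacts [haP h, hbP h]
      | meet ha hb iha ihb =>
          obtain ⟨T1, hT1, h1⟩ := iha
          obtain ⟨T2, hT2, h2⟩ := ihb
          refine ⟨T1 ∪ T2, by rw [Finset.coe_union]; exact Set.union_subset hT1 hT2, ?_⟩
          intro P hPmin hTP hcP
          rcases P.2.2.2 _ _ hcP with h | h
          · exact h1 P hPmin (fun z hz => hTP z (Finset.mem_union_left _ hz)) h
          · exact h2 P hPmin (fun z hz => hTP z (Finset.mem_union_right _ hz)) h
    have hMeets_bot : ¬ ZDMeets (g '' S) ⊥ := by
      intro h
      obtain ⟨T, hTS, hT⟩ := hfree ⊥ h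
      obtain ⟨P, hPmin, hTP⟩ := hnofinS T hTS
      exact hT P hPmin hTP (zd_bot_mem P.2.1)
    have hF0good : ZDGoodF {w : L | ∃ c, ZDMeets (g '' S) c ∧ c ≤ w} := by
      refine ⟨⟨g z0, g z0, ZDMeets.base ⟨z0, hz0S, rfl⟩, le_refl _⟩, ?_, ?_, ?_⟩
      · rintro a b hab ⟨c, hc, hca⟩
        exact ⟨c, hc, hca.trans hab⟩
      · rintro a ⟨c1, hc1, hc1a⟩ b ⟨c2, hc2, hc2b⟩
        exact ⟨c1 ⊓ c2, ZDMeets.meet hc1 hc2, inf_le_inf hc1a hc2b⟩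
      · rintro ⟨c, hc, hcb⟩
        exact hMeets_bot (le_bot_iff.mp hcb ▸ hc)
    obtain ⟨M, hF0M, hMgood, hMmax⟩ := zd_max_filter hF0good
    obtain ⟨hMprime, hMmin⟩ := zd_compl_prime h0 hMgood hMmax
    have hPMin : (⟨Mᶜ, hMprime⟩ : Spec L) ∈ MinSpec L := fun P' hP' hsub => hMmin P' hP' hsub
    obtain ⟨z, hzS, hzP⟩ := hcovS ⟨Mᶜ, hMprime⟩ hPMin
    have hgzM : g z ∈ M := hF0M ⟨g z, ZDMeets.base ⟨z, hzS, rfl⟩, le_refl _⟩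
    have hbotc : z ⊓ g z ∈ (Mᶜ : Set L) := by
      rw [hg1 z hzS]
      exact hMgood.2.2.2
    rcases hMprime.2.2 z (g z) hbotc with h | h
    · exact hzP h
    · exact h hgzM
  · -- Min(L) compact → Γ(L) complemented
    intro hcpt x hx
    obtain ⟨hxbot, w, hwbot, hxw⟩ := hx
    have hFclosed : IsClosed {P : Spec L | x ∈ P.1} := by
      have heq : {P : Spec L | x ∈ P.1} = (ZDU x)ᶜ := by
        ext P
        simp [ZDU]
      rw [heq]
      exact (zdU_isOpen x).isClosed_compl
    have hF : IsCompact (MinSpec L ∩ {P : Spec L | x ∈ P.1}) := hcpt.inter_right hFclosed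
    have hcov : MinSpec L ∩ {P : Spec L | x ∈ P.1} ⊆
        ⋃ i : {z : L // x ⊓ z = ⊥}, ZDU i.1 := by
      rintro P ⟨hPmin, hPx⟩
      obtain ⟨z, hz, hxz⟩ := zd_minprime_ann h0 P.2 hPmin hPx
      exact Set.mem_iUnion.mpr ⟨⟨z, hxz⟩, hz⟩
    obtain ⟨t, ht⟩ := hF.elim_finite_subcover
      (fun i : {z : L // x ⊓ z = ⊥} => ZDU i.1) (fun i => zdU_isOpen i.1) hcov
    set y := w ⊔ t.sup (fun i => i.1) with hy
    have hxy : x ⊓ y = ⊥ := h0 _ _ _ hxw (zd_sup_ann h0 x _ t (fun i _ => i.2))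
    have hybot : y ≠ ⊥ := fun h => hwbot (le_bot_iff.mp (h ▸ le_sup_left))
    have hxny : x ≠ y := fun h => hxbot (by rw [← hxy, ← h, inf_idem])
    refine ⟨y, ⟨hxny, hxbot, hybot, hxy⟩, ?_⟩
    rintro c ⟨⟨hcx, hcbot, -, hcxb⟩, ⟨hcy, -, -, hcyb⟩⟩
    obtain ⟨Q, hQ, hQmin, hcQ⟩ := zd_exists_minprime h0 hcbot
    have hxQ : x ∈ Q := by
      rcases hQ.2.2 c x (by rw [hcxb]; exact zd_bot_mem hQ.1) with h | h
      · exact absurd h hcQ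
      · exact h
    have hQF : (⟨Q, hQ⟩ : Spec L) ∈ MinSpec L ∩ {P : Spec L | x ∈ P.1} :=
      ⟨fun P' hP' hsub => hQmin P' hP' hsub, hxQ⟩
    obtain ⟨i, hit, hiQ⟩ := Set.mem_iUnion₂.mp (ht hQF)
    have hiy : i.1 ≤ y := le_trans (Finset.le_sup hit) le_sup_right
    have h1 : i.1 ⊓ c = ⊥ := by
      refine le_bot_iff.mp ?_
      calc i.1 ⊓ c ≤ y ⊓ c := inf_le_inf_right c hiy
        _ = ⊥ := by rw [inf_comm]; exact hcyb
    rcases hQ.2.2 i.1 c (by rw [h1]; exact zd_bot_mem hQ.1) with h | h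
    · exact hiQ h
    · exact hcQ h
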